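/- S_n / n converges in distribution, as n → ∞, to the three-point law p·δ_{p−q} + r·δ_0 + q·δ_{−(p−q)} (i.e. the limit takes the value p − q with probability p, the value 0 with probability r, and the value −(p−q) with probability q). Moreover E(S_n/n) → (p−q)² and Var(S_n/n) → (p−q)²·(p + q − (p−q)²) as n → ∞. -/

import Mathlib

open MeasureTheory ProbabilityTheory Filter Real
open scoped ENNReal NNReal Topology Classical

noncomputable section

/-- The σ-algebra `σ(X_1, …, X_n)` generated by the first `n` steps. -/
def sigmaUpTo {Ω : Type*} (X : ℕ → Ω → ℝ) (n : ℕ) : MeasurableSpace Ω :=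
  MeasurableSpace.comap (fun ω (k : Fin n) => X ((k : ℕ) + 1) ω) inferInstance

/-- Weak convergence of a sequence of measures on `ℝ` (convergence in distribution):
integrals of every bounded continuous function converge. -/
def TendstoInDist (μs : ℕ → Measure ℝ) (ν : Measure ℝ) : Prop :=
  ∀ f : BoundedContinuousFunction ℝ ℝ,
    Tendsto (fun n => ∫ x, f x ∂(μs n)) atTop (𝓝 (∫ x, f x ∂ν))

section Aux
variable {Ω : Type*} [m0 : MeasurableSpace Ω]

omit m0 in
lemma measurable_sigmaUpTo (X : ℕ → Ω → ℝ) {k n : ℕ} (h1 : 1 ≤ k) (h2 : k ≤ n) :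
    Measurable[sigmaUpTo X n] (X k) := by
  have h : X k = (fun v : Fin n → ℝ => v ⟨k - 1, by omega⟩) ∘
      (fun ω (j : Fin n) => X ((j : ℕ) + 1) ω) := by
    funext ω; simp only [Function.comp_apply]; congr 1; omega
  rw [h]
  exact (measurable_pi_apply _).comp (Measurable.of_comap_le le_rfl)

lemma sigmaUpTo_le (X : ℕ → Ω → ℝ) (hXmeas : ∀ n, Measurable (X n)) (n : ℕ) :
    sigmaUpTo X n ≤ m0 := by
  rw [sigmaUpTo, ← measurable_iff_comap_le]
  exact measurable_pi_lambda _ fun k => hXmeas _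

lemma integrable_of_bdd {P : Measure Ω} [IsProbabilityMeasure P] {f : Ω → ℝ}
    (hf : Measurable f) {C : ℝ} (hbd : ∀ ω, |f ω| ≤ C) : Integrable f P :=
  (integrable_const C).mono' hf.aestronglyMeasurable (ae_of_all _ fun ω => hbd ω)

variable (P : Measure Ω) [IsProbabilityMeasure P] (p q : ℝ) (X : ℕ → Ω → ℝ)

lemma condexp_step (hXmeas : ∀ n, Measurable (X n))
    (hXval : ∀ n, 1 ≤ n → ∀ ω, X n ω = 1 ∨ X n ω = -1 ∨ X n ω = 0)
    (hcondp : ∀ n : ℕ, 1 ≤ n →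
      P[Set.indicator {ω | X (n + 1) ω = 1} (fun _ => (1 : ℝ)) | sigmaUpTo X n]
        =ᵐ[P] fun ω =>
          p * (if X 1 ω = 1 then (1 : ℝ) else 0) + q * (if X 1 ω = -1 then (1 : ℝ) else 0))
    (hcondq : ∀ n : ℕ, 1 ≤ n →
      P[Set.indicator {ω | X (n + 1) ω = -1} (fun _ => (1 : ℝ)) | sigmaUpTo X n]
        =ᵐ[P] fun ω =>
          q * (if X 1 ω = 1 then (1 : ℝ) else 0) + p * (if X 1 ω = -1 then (1 : ℝ) else 0))
    {n : ℕ} (hn : 1 ≤ n) :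
    P[X (n+1) | sigmaUpTo X n] =ᵐ[P] fun ω => (p - q) * X 1 ω := by
  have hs1 : MeasurableSet {ω | X (n+1) ω = 1} := hXmeas (n+1) (measurableSet_singleton 1)
  have hs2 : MeasurableSet {ω | X (n+1) ω = -1} := hXmeas (n+1) (measurableSet_singleton (-1))
  have h1i : Integrable (Set.indicator {ω | X (n+1) ω = 1} fun _ => (1:ℝ)) P :=
    (integrable_const 1).indicator hs1
  have h2i : Integrable (Set.indicator {ω | X (n+1) ω = -1} fun _ => (1:ℝ)) P :=
    (integrable_const 1).indicator hs2
  have hd : X (n+1) = Set.indicator {ω | X (n+1) ω = 1} (fun _ => (1:ℝ)) -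
      Set.indicator {ω | X (n+1) ω = -1} (fun _ => (1:ℝ)) := by
    funext ω
    rcases hXval (n+1) (by omega) ω with h | h | h <;>
      simp [Set.indicator_apply, h, Pi.sub_apply] <;> norm_num
  rw [hd]
  refine (condExp_sub h1i h2i _).trans ?_
  filter_upwards [hcondp n hn, hcondq n hn] with ω h1 h2
  simp only [Pi.sub_apply, h1, h2]
  rcases hXval 1 le_rfl ω with h | h | h <;>
    simp [h, show ¬((1:ℝ) = -1) from by norm_num, show ¬((-1:ℝ) = 1) from by norm_num] <;> ring
lemma ortho (hXmeas : ∀ n, Measurable (X n))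
    (hstep : ∀ n : ℕ, 1 ≤ n → P[X (n+1) | sigmaUpTo X n] =ᵐ[P] fun ω => (p - q) * X 1 ω)
    (hpq1 : |p - q| ≤ 1)
    (hXbd : ∀ k, 1 ≤ k → ∀ ω, |X k ω| ≤ 1)
    {n : ℕ} (hn : 1 ≤ n)
    {g : Ω → ℝ} (hg : Measurable[sigmaUpTo X n] g) {C : ℝ} (hgbd : ∀ ω, |g ω| ≤ C) :
    ∫ ω, g ω * (X (n+1) ω - (p - q) * X 1 ω) ∂P = 0 := by
  have hm : sigmaUpTo X n ≤ m0 := sigmaUpTo_le X hXmeas n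
  have hMmeas : Measurable (fun ω => (p - q) * X 1 ω) := (hXmeas 1).const_mul _
  have hMbd : ∀ ω, |(p - q) * X 1 ω| ≤ 1 := fun ω => by
    rw [abs_mul]
    calc |p - q| * |X 1 ω| ≤ 1 * 1 :=
      mul_le_mul hpq1 (hXbd 1 le_rfl ω) (abs_nonneg _) zero_le_one
    _ = 1 := one_mul 1
  have hfmeas : Measurable (fun ω => X (n+1) ω - (p - q) * X 1 ω) := (hXmeas _).sub hMmeas
  have hfbd : ∀ ω, |X (n+1) ω - (p - q) * X 1 ω| ≤ 2 := fun ω => by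
    calc |X (n+1) ω - (p - q) * X 1 ω| ≤ |X (n+1) ω| + |(p - q) * X 1 ω| := abs_sub _ _
    _ ≤ 1 + 1 := add_le_add (hXbd _ (by omega) ω) (hMbd ω)
    _ = 2 := by norm_num
  have hfi : Integrable (fun ω => X (n+1) ω - (p - q) * X 1 ω) P := integrable_of_bdd hfmeas hfbd
  have hXi : Integrable (X (n+1)) P := integrable_of_bdd (hXmeas _) (hXbd _ (by omega))
  have hMi : Integrable (fun ω => (p - q) * X 1 ω) P := integrable_of_bdd hMmeas hMbd
  have hgfi : Integrable (g * fun ω => X (n+1) ω - (p - q) * X 1 ω) P := by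
    refine integrable_of_bdd (((hg.mono hm le_rfl)).mul hfmeas) (C := C * 2 + 1) fun ω => ?_
    simp only [Pi.mul_apply, abs_mul]
    calc |g ω| * |X (n+1) ω - (p - q) * X 1 ω| ≤ C * 2 := by
          refine mul_le_mul (hgbd ω) (hfbd ω) (abs_nonneg _) ?_
          exact le_trans (abs_nonneg _) (hgbd ω)
    _ ≤ C * 2 + 1 := by linarith
  have hc0 : P[fun ω => X (n+1) ω - (p - q) * X 1 ω | sigmaUpTo X n] =ᵐ[P] 0 := by
    refine (condExp_sub hXi hMi _).trans ?_
    have h2 : P[(fun ω => (p - q) * X 1 ω) | sigmaUpTo X n] = fun ω => (p - q) * X 1 ω :=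
      condExp_of_stronglyMeasurable hm
        (((measurable_sigmaUpTo X le_rfl hn).const_mul _).stronglyMeasurable) hMi
    rw [h2]
    filter_upwards [hstep n hn] with ω h
    simp [h]
  have key := condExp_mul_of_stronglyMeasurable_left (μ := P) (m := sigmaUpTo X n)
    hg.stronglyMeasurable hgfi hfi
  calc ∫ ω, g ω * (X (n+1) ω - (p - q) * X 1 ω) ∂P
      = ∫ ω, (P[g * fun ω => X (n+1) ω - (p - q) * X 1 ω | sigmaUpTo X n]) ω ∂P :=
        (integral_condExp hm).symm
    _ = 0 := by
        rw [integral_congr_ae (key.trans ?_), integral_zero]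
        · filter_upwards [hc0] with ω h
          simp only [Pi.mul_apply, h, Pi.zero_apply, mul_zero]

lemma integral_X1 (hXmeas : ∀ n, Measurable (X n))
    (hXval : ∀ ω, X 1 ω = 1 ∨ X 1 ω = -1 ∨ X 1 ω = 0)
    (hp : 0 ≤ p) (hq : 0 ≤ q)
    (hX1p : P {ω | X 1 ω = 1} = ENNReal.ofReal p)
    (hX1q : P {ω | X 1 ω = -1} = ENNReal.ofReal q) :
    ∫ ω, X 1 ω ∂P = p - q ∧ ∫ ω, (X 1 ω) ^ 2 ∂P = p + q := by
  have hA : MeasurableSet {ω | X 1 ω = 1} := hXmeas 1 (measurableSet_singleton 1)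
  have hB : MeasurableSet {ω | X 1 ω = -1} := hXmeas 1 (measurableSet_singleton (-1))
  have hiA : Integrable (Set.indicator {ω | X 1 ω = 1} fun _ => (1:ℝ)) P :=
    (integrable_const 1).indicator hA
  have hiB : Integrable (Set.indicator {ω | X 1 ω = -1} fun _ => (1:ℝ)) P :=
    (integrable_const 1).indicator hB
  have eA : ∫ ω, Set.indicator {ω | X 1 ω = 1} (fun _ => (1:ℝ)) ω ∂P = p := by
    rw [integral_indicator_const (1:ℝ) hA, measureReal_def, hX1p, ENNReal.toReal_ofReal hp, smul_eq_mul, mul_one]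
  have eB : ∫ ω, Set.indicator {ω | X 1 ω = -1} (fun _ => (1:ℝ)) ω ∂P = q := by
    rw [integral_indicator_const (1:ℝ) hB, measureReal_def, hX1q, ENNReal.toReal_ofReal hq, smul_eq_mul, mul_one]
  constructor
  · have h1 : (fun ω => X 1 ω) = fun ω =>
        Set.indicator {ω | X 1 ω = 1} (fun _ => (1:ℝ)) ω -
        Set.indicator {ω | X 1 ω = -1} (fun _ => (1:ℝ)) ω := by
      funext ω
      rcases hXval ω with h | h | h <;>
        simp [Set.indicator_apply, h] <;> norm_num
    rw [h1, integral_sub hiA hiB, eA, eB]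
  · have h2 : (fun ω => (X 1 ω) ^ 2) = fun ω =>
        Set.indicator {ω | X 1 ω = 1} (fun _ => (1:ℝ)) ω +
        Set.indicator {ω | X 1 ω = -1} (fun _ => (1:ℝ)) ω := by
      funext ω
      rcases hXval ω with h | h | h <;>
        simp [Set.indicator_apply, h] <;> norm_num
    rw [h2, integral_add hiA hiB, eA, eB]

lemma sum_sq_integral_le (Z : ℕ → Ω → ℝ) (hmeas : ∀ k, 1 ≤ k → Measurable (Z k))
    (hbd : ∀ k, 1 ≤ k → ∀ ω, |Z k ω| ≤ 2)
    (horth : ∀ j k, 1 ≤ j → 1 ≤ k → j ≠ k → ∫ ω, Z j ω * Z k ω ∂P = 0)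
    (n : ℕ) : ∫ ω, (∑ k ∈ Finset.Icc 1 n, Z k ω) ^ 2 ∂P ≤ 4 * n := by
  have hint : ∀ j k, 1 ≤ j → 1 ≤ k → Integrable (fun ω => Z j ω * Z k ω) P := by
    intro j k hj hk
    refine integrable_of_bdd ((hmeas j hj).mul (hmeas k hk)) (C := 4) fun ω => ?_
    rw [abs_mul]
    calc |Z j ω| * |Z k ω| ≤ 2 * 2 :=
      mul_le_mul (hbd j hj ω) (hbd k hk ω) (abs_nonneg _) (by norm_num)
    _ = 4 := by norm_num
  have hexp : (fun ω => (∑ k ∈ Finset.Icc 1 n, Z k ω) ^ 2) =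
      fun ω => ∑ j ∈ Finset.Icc 1 n, ∑ k ∈ Finset.Icc 1 n, Z j ω * Z k ω := by
    funext ω; rw [sq, Finset.sum_mul_sum]
  rw [hexp]
  rw [integral_finset_sum _ (fun j hj => integrable_finset_sum _
    (fun k hk => hint j k (Finset.mem_Icc.mp hj).1 (Finset.mem_Icc.mp hk).1))]
  have hrw : ∀ j ∈ Finset.Icc 1 n,
      (∫ ω, ∑ k ∈ Finset.Icc 1 n, Z j ω * Z k ω ∂P) = ∫ ω, Z j ω * Z j ω ∂P := by
    intro j hj
    have hj1 : 1 ≤ j := (Finset.mem_Icc.mp hj).1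
    rw [integral_finset_sum _ (fun k hk => hint j k hj1 (Finset.mem_Icc.mp hk).1)]
    exact Finset.sum_eq_single_of_mem j hj
      (fun k hk hne => horth j k hj1 (Finset.mem_Icc.mp hk).1 (Ne.symm hne))
  rw [Finset.sum_congr rfl hrw]
  have hdiag : ∀ j ∈ Finset.Icc 1 n, (∫ ω, Z j ω * Z j ω ∂P) ≤ 4 := by
    intro j hj
    have hj1 : 1 ≤ j := (Finset.mem_Icc.mp hj).1
    calc (∫ ω, Z j ω * Z j ω ∂P) ≤ ∫ _, (4 : ℝ) ∂P := by
          refine integral_mono (hint j j hj1 hj1) (integrable_const 4) fun ω => ?_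
          have h := abs_le.mp (hbd j hj1 ω)
          nlinarith [h.1, h.2]
      _ = 4 := by simp
  calc ∑ j ∈ Finset.Icc 1 n, ∫ ω, Z j ω * Z j ω ∂P ≤ ∑ _j ∈ Finset.Icc 1 n, (4:ℝ) :=
        Finset.sum_le_sum hdiag
    _ = 4 * n := by simp [Nat.card_Icc, mul_comm]


end Aux

/-- for the ERWD remembering only the first step, `Sₙ/n` converges in
distribution to `p·δ_{p−q} + r·δ₀ + q·δ_{−(p−q)}`, and the mean and variance of `Sₙ/n`
converge to `(p−q)²` and `(p−q)²(p+q−(p−q)²)` respectively. -/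
theorem erwd_first_step_memory_weak_limit
    {Ω : Type*} [MeasurableSpace Ω] (P : Measure Ω) [IsProbabilityMeasure P]
    (p q r : ℝ) (hp : 0 < p) (hp1 : p < 1) (hq : 0 < q) (hq1 : q < 1)
    (hr : 0 < r) (hr1 : r < 1) (hpqr : p + q + r = 1)
    (X : ℕ → Ω → ℝ) (hXmeas : ∀ n, Measurable (X n))
    (hXval : ∀ n, 1 ≤ n → ∀ ω, X n ω = 1 ∨ X n ω = -1 ∨ X n ω = 0)
    (hX1p : P {ω | X 1 ω = 1} = ENNReal.ofReal p)
    (hX1q : P {ω | X 1 ω = -1} = ENNReal.ofReal q)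
    (hX1r : P {ω | X 1 ω = 0} = ENNReal.ofReal r)
    (hcondp : ∀ n : ℕ, 1 ≤ n →
      P[Set.indicator {ω | X (n + 1) ω = 1} (fun _ => (1 : ℝ)) | sigmaUpTo X n]
        =ᵐ[P] fun ω =>
          p * (if X 1 ω = 1 then (1 : ℝ) else 0) + q * (if X 1 ω = -1 then (1 : ℝ) else 0))
    (hcondq : ∀ n : ℕ, 1 ≤ n →
      P[Set.indicator {ω | X (n + 1) ω = -1} (fun _ => (1 : ℝ)) | sigmaUpTo X n]
        =ᵐ[P] fun ω =>
          q * (if X 1 ω = 1 then (1 : ℝ) else 0) + p * (if X 1 ω = -1 then (1 : ℝ) else 0))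
    (S : ℕ → Ω → ℝ) (hS : ∀ n ω, S n ω = ∑ k ∈ Finset.Icc 1 n, X k ω)
    :
    TendstoInDist (fun n : ℕ => Measure.map (fun ω => S n ω / n) P)
      (ENNReal.ofReal p • Measure.dirac (p - q)
        + ENNReal.ofReal r • Measure.dirac 0
        + ENNReal.ofReal q • Measure.dirac (-(p - q))) ∧
    Tendsto (fun n : ℕ => ∫ ω, S n ω / n ∂P) atTop (𝓝 ((p - q) ^ 2)) ∧
    Tendsto (fun n : ℕ => variance (fun ω => S n ω / n) P) atTop
      (𝓝 ((p - q) ^ 2 * (p + q - (p - q) ^ 2))) := by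
  have hpq1 : |p - q| ≤ 1 := abs_le.mpr ⟨by linarith, by linarith⟩
  have hXbd : ∀ k, 1 ≤ k → ∀ ω, |X k ω| ≤ 1 := by
    intro k hk ω; rcases hXval k hk ω with h | h | h <;> rw [h] <;> norm_num
  have hstep : ∀ n, 1 ≤ n →
      P[X (n+1) | sigmaUpTo X n] =ᵐ[P] fun ω => (p - q) * X 1 ω := fun n hn =>
    condexp_step P p q X hXmeas hXval hcondp hcondq hn
  have hMmeas : Measurable (fun ω => (p - q) * X 1 ω) := (hXmeas 1).const_mul _
  have hMbd : ∀ ω, |(p - q) * X 1 ω| ≤ 1 := fun ω => by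
    rw [abs_mul]
    calc |p - q| * |X 1 ω| ≤ 1 * 1 :=
      mul_le_mul hpq1 (hXbd 1 le_rfl ω) (abs_nonneg _) zero_le_one
    _ = 1 := one_mul 1
  have hMint : Integrable (fun ω => (p - q) * X 1 ω) P := integrable_of_bdd hMmeas hMbd
  obtain ⟨hEX1, hEX1sq⟩ := integral_X1 P p q X hXmeas (hXval 1 le_rfl) hp.le hq.le hX1p hX1q
  have hEM : ∫ ω, (p - q) * X 1 ω ∂P = (p - q) ^ 2 := by
    rw [integral_const_mul, hEX1, sq]
  have hEMsq : ∫ ω, ((p - q) * X 1 ω) ^ 2 ∂P = (p - q) ^ 2 * (p + q) := by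
    have h : (fun ω => ((p - q) * X 1 ω) ^ 2) = fun ω => (p - q) ^ 2 * (X 1 ω) ^ 2 :=
      funext fun ω => by ring
    rw [h, integral_const_mul, hEX1sq]
  have hEMX1 : ∫ ω, ((p - q) * X 1 ω) * X 1 ω ∂P = (p - q) * (p + q) := by
    have h : (fun ω => ((p - q) * X 1 ω) * X 1 ω) = fun ω => (p - q) * (X 1 ω) ^ 2 :=
      funext fun ω => by ring
    rw [h, integral_const_mul, hEX1sq]
  have hXk_int : ∀ k, 1 ≤ k → Integrable (X k) P := fun k hk =>
    integrable_of_bdd (hXmeas k) (hXbd k hk)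
  have hMXk_bd : ∀ k, 1 ≤ k → ∀ ω, |((p - q) * X 1 ω) * X k ω| ≤ 1 := fun k hk ω => by
    rw [abs_mul]
    calc |(p - q) * X 1 ω| * |X k ω| ≤ 1 * 1 :=
      mul_le_mul (hMbd ω) (hXbd k hk ω) (abs_nonneg _) zero_le_one
    _ = 1 := one_mul 1
  have hMXk_int : ∀ k, 1 ≤ k → Integrable (fun ω => ((p - q) * X 1 ω) * X k ω) P :=
    fun k hk => integrable_of_bdd (hMmeas.mul (hXmeas k)) (hMXk_bd k hk)
  have hEXk : ∀ k, 2 ≤ k → ∫ ω, X k ω ∂P = (p - q) ^ 2 := by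
    intro k hk
    obtain ⟨n, hn, rfl⟩ : ∃ n, 1 ≤ n ∧ k = n + 1 := ⟨k - 1, by omega, by omega⟩
    have h0 := ortho P p q X hXmeas hstep hpq1 hXbd hn
      (g := fun _ => (1 : ℝ)) measurable_const (C := 1) (fun ω => by norm_num)
    simp only [one_mul] at h0
    rw [integral_sub (hXk_int _ (by omega)) hMint] at h0
    rw [hEM] at h0
    linarith
  have hEMXk : ∀ k, 2 ≤ k →
      ∫ ω, ((p - q) * X 1 ω) * X k ω ∂P = (p - q) ^ 2 * (p + q) := by
    intro k hk
    obtain ⟨n, hn, rfl⟩ : ∃ n, 1 ≤ n ∧ k = n + 1 := ⟨k - 1, by omega, by omega⟩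
    have h0 := ortho P p q X hXmeas hstep hpq1 hXbd hn
      (g := fun ω => (p - q) * X 1 ω)
      ((measurable_sigmaUpTo X le_rfl hn).const_mul _) (C := 1) hMbd
    have hpt : (fun ω => ((p - q) * X 1 ω) * (X (n+1) ω - (p - q) * X 1 ω)) =
        fun ω => ((p - q) * X 1 ω) * X (n+1) ω - ((p - q) * X 1 ω) ^ 2 :=
      funext fun ω => by ring
    rw [hpt] at h0
    have hMsq_int : Integrable (fun ω => ((p - q) * X 1 ω) ^ 2) P := by
      refine integrable_of_bdd (hMmeas.pow_const 2) (C := 1) fun ω => ?_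
      rw [abs_pow, sq]
      calc |(p - q) * X 1 ω| * |(p - q) * X 1 ω| ≤ 1 * 1 :=
        mul_le_mul (hMbd ω) (hMbd ω) (abs_nonneg _) zero_le_one
      _ = 1 := one_mul 1
    rw [integral_sub (hMXk_int _ (by omega)) hMsq_int, hEMsq] at h0
    linarith
  -- the centered variables
  have hZbd : ∀ k, 1 ≤ k → ∀ ω, |X k ω - (p - q) * X 1 ω| ≤ 2 := fun k hk ω => by
    calc |X k ω - (p - q) * X 1 ω| ≤ |X k ω| + |(p - q) * X 1 ω| := abs_sub _ _
    _ ≤ 1 + 1 := add_le_add (hXbd k hk ω) (hMbd ω)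
    _ = 2 := by norm_num
  have hZmeas : ∀ k, Measurable (fun ω => X k ω - (p - q) * X 1 ω) := fun k =>
    (hXmeas k).sub hMmeas
  have hZorthlt : ∀ j k, 1 ≤ j → j < k →
      ∫ ω, (X j ω - (p - q) * X 1 ω) * (X k ω - (p - q) * X 1 ω) ∂P = 0 := by
    intro j k hj hjk
    obtain ⟨n, hn, rfl⟩ : ∃ n, 1 ≤ n ∧ k = n + 1 := ⟨k - 1, by omega, by omega⟩
    exact ortho P p q X hXmeas hstep hpq1 hXbd hn
      ((measurable_sigmaUpTo X hj (by omega)).sub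
        ((measurable_sigmaUpTo X le_rfl hn).const_mul _)) (hZbd j hj)
  have hZorth : ∀ j k, 1 ≤ j → 1 ≤ k → j ≠ k →
      ∫ ω, (X j ω - (p - q) * X 1 ω) * (X k ω - (p - q) * X 1 ω) ∂P = 0 := by
    intro j k hj hk hne
    rcases hne.lt_or_gt with h | h
    · exact hZorthlt j k hj h
    · rw [integral_congr_ae
        (g := fun ω => (X k ω - (p - q) * X 1 ω) * (X j ω - (p - q) * X 1 ω))
        (ae_of_all _ fun ω => mul_comm _ _)]
      exact hZorthlt k j hk h
  have hsumsq : ∀ n : ℕ,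
      ∫ ω, (∑ k ∈ Finset.Icc 1 n, (X k ω - (p - q) * X 1 ω)) ^ 2 ∂P ≤ 4 * n :=
    sum_sq_integral_le P (fun k ω => X k ω - (p - q) * X 1 ω)
      (fun k _ => hZmeas k) (fun k hk => hZbd k hk) hZorth
  -- facts about S
  have hSmeas : ∀ n, Measurable (S n) := fun n => by
    have h : S n = fun ω => ∑ k ∈ Finset.Icc 1 n, X k ω := funext (hS n)
    rw [h]; exact Finset.measurable_sum _ fun k _ => hXmeas k
  have hgmeas : ∀ n : ℕ, Measurable (fun ω => S n ω / (n : ℝ)) := fun n =>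
    (hSmeas n).div_const _
  have hSbd : ∀ n ω, |S n ω| ≤ n := by
    intro n ω; rw [hS]
    calc |∑ k ∈ Finset.Icc 1 n, X k ω| ≤ ∑ k ∈ Finset.Icc 1 n, |X k ω| :=
        Finset.abs_sum_le_sum_abs _ _
    _ ≤ ∑ _k ∈ Finset.Icc 1 n, (1 : ℝ) :=
        Finset.sum_le_sum fun k hk => hXbd k (Finset.mem_Icc.mp hk).1 ω
    _ = n := by simp [Nat.card_Icc]
  have hgbd : ∀ n ω, |S n ω / (n : ℝ)| ≤ 1 := by
    intro n ω
    rcases Nat.eq_zero_or_pos n with rfl | hn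
    · simp
    · have hnpos : (0 : ℝ) < n := by exact_mod_cast hn
      rw [abs_div, abs_of_nonneg hnpos.le, div_le_one hnpos]
      exact hSbd n ω
  have hdiff : ∀ n : ℕ, 1 ≤ n → (fun ω => S n ω / (n : ℝ) - (p - q) * X 1 ω) =
      fun ω => (∑ k ∈ Finset.Icc 1 n, (X k ω - (p - q) * X 1 ω)) / (n : ℝ) := by
    intro n hn; funext ω
    have hne : (n : ℝ) ≠ 0 := Nat.cast_ne_zero.mpr (by omega)
    rw [hS, Finset.sum_sub_distrib, Finset.sum_const, Nat.card_Icc,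
      Nat.add_sub_cancel, nsmul_eq_mul]
    field_simp
  have heps_le : ∀ n : ℕ, 1 ≤ n →
      ∫ ω, (S n ω / (n : ℝ) - (p - q) * X 1 ω) ^ 2 ∂P ≤ 4 / n := by
    intro n hn
    have hnpos : (0 : ℝ) < n := by exact_mod_cast hn
    have h1 : (fun ω => (S n ω / (n : ℝ) - (p - q) * X 1 ω) ^ 2) =
        fun ω => (∑ k ∈ Finset.Icc 1 n, (X k ω - (p - q) * X 1 ω)) ^ 2 / (n : ℝ) ^ 2 := by
      funext ω
      rw [congrFun (hdiff n hn) ω, div_pow]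
    rw [h1, integral_div, div_le_div_iff₀ (by positivity) hnpos]
    calc (∫ ω, (∑ k ∈ Finset.Icc 1 n, (X k ω - (p - q) * X 1 ω)) ^ 2 ∂P) * n
        ≤ (4 * n) * n := mul_le_mul_of_nonneg_right (hsumsq n) hnpos.le
    _ = 4 * (n : ℝ) ^ 2 := by ring
  have heps0 : Tendsto (fun n : ℕ => ∫ ω, (S n ω / (n : ℝ) - (p - q) * X 1 ω) ^ 2 ∂P)
      atTop (𝓝 0) := by
    refine squeeze_zero' ?_ ?_ (tendsto_const_div_atTop_nhds_zero_nat 4)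
    · exact Eventually.of_forall fun n => integral_nonneg fun ω => sq_nonneg _
    · filter_upwards [eventually_ge_atTop 1] with n hn; exact heps_le n hn
  -- mean
  have hicc : ∀ n : ℕ, 1 ≤ n → Finset.Icc 1 n = insert 1 (Finset.Icc 2 n) := by
    intro n hn
    ext x; simp only [Finset.mem_Icc, Finset.mem_insert]; omega
  have hcast : ∀ n : ℕ, 1 ≤ n → ((n + 1 - 2 : ℕ) : ℝ) = (n : ℝ) - 1 := by
    intro n hn
    have h : n + 1 - 2 = n - 1 := by omega
    rw [h, Nat.cast_sub hn, Nat.cast_one]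
  have hmean_exact : ∀ n : ℕ, 1 ≤ n → ∫ ω, S n ω / (n : ℝ) ∂P =
      ((p - q) + ((n : ℝ) - 1) * (p - q) ^ 2) / n := by
    intro n hn
    have h1 : (fun ω => S n ω / (n : ℝ)) =
        fun ω => (∑ k ∈ Finset.Icc 1 n, X k ω) / (n : ℝ) := by
      funext ω; rw [hS]
    rw [h1, integral_div,
      integral_finset_sum _ (fun k hk => hXk_int k (Finset.mem_Icc.mp hk).1)]
    congr 1
    rw [hicc n hn, Finset.sum_insert (by simp [Finset.mem_Icc]),
      Finset.sum_congr rfl (fun k hk => hEXk k (Finset.mem_Icc.mp hk).1),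
      Finset.sum_const, Nat.card_Icc, nsmul_eq_mul, hEX1, hcast n hn]
  have hmean : Tendsto (fun n : ℕ => ∫ ω, S n ω / (n : ℝ) ∂P) atTop (𝓝 ((p - q) ^ 2)) := by
    have hlim : Tendsto (fun n : ℕ => (p - q) ^ 2 + ((p - q) - (p - q) ^ 2) / n) atTop
        (𝓝 ((p - q) ^ 2 + 0)) :=
      tendsto_const_nhds.add (tendsto_const_div_atTop_nhds_zero_nat _)
    rw [add_zero] at hlim
    refine Tendsto.congr' ?_ hlim
    filter_upwards [eventually_ge_atTop 1] with n hn
    have hne : (n : ℝ) ≠ 0 := Nat.cast_ne_zero.mpr (by omega)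
    rw [hmean_exact n hn]
    field_simp
    ring
  -- second moment
  have hw_exact : ∀ n : ℕ, 1 ≤ n → ∫ ω, ((p - q) * X 1 ω) * (S n ω / (n : ℝ)) ∂P =
      ((p - q) * (p + q) + ((n : ℝ) - 1) * ((p - q) ^ 2 * (p + q))) / n := by
    intro n hn
    have h1 : (fun ω => ((p - q) * X 1 ω) * (S n ω / (n : ℝ))) =
        fun ω => (∑ k ∈ Finset.Icc 1 n, ((p - q) * X 1 ω) * X k ω) / (n : ℝ) := by
      funext ω; rw [hS, ← Finset.mul_sum, mul_div_assoc]
    rw [h1, integral_div,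
      integral_finset_sum _ (fun k hk => hMXk_int k (Finset.mem_Icc.mp hk).1)]
    congr 1
    rw [hicc n hn, Finset.sum_insert (by simp [Finset.mem_Icc]),
      Finset.sum_congr rfl (fun k hk => hEMXk k (Finset.mem_Icc.mp hk).1),
      Finset.sum_const, Nat.card_Icc, nsmul_eq_mul, hEMX1, hcast n hn]
  have hw : Tendsto (fun n : ℕ => ∫ ω, ((p - q) * X 1 ω) * (S n ω / (n : ℝ)) ∂P) atTop
      (𝓝 ((p - q) ^ 2 * (p + q))) := by
    have hlim : Tendsto (fun n : ℕ =>
        (p - q) ^ 2 * (p + q) + ((p - q) * (p + q) - (p - q) ^ 2 * (p + q)) / n) atTop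
        (𝓝 ((p - q) ^ 2 * (p + q) + 0)) :=
      tendsto_const_nhds.add (tendsto_const_div_atTop_nhds_zero_nat _)
    rw [add_zero] at hlim
    refine Tendsto.congr' ?_ hlim
    filter_upwards [eventually_ge_atTop 1] with n hn
    have hne : (n : ℝ) ≠ 0 := Nat.cast_ne_zero.mpr (by omega)
    rw [hw_exact n hn]
    field_simp
    ring
  have hgint2 : ∀ n : ℕ, Integrable (fun ω => (S n ω / (n : ℝ)) ^ 2) P := by
    intro n
    refine integrable_of_bdd ((hgmeas n).pow_const 2) (C := 1) fun ω => ?_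
    rw [abs_pow, sq]
    calc |S n ω / (n : ℝ)| * |S n ω / (n : ℝ)| ≤ 1 * 1 :=
      mul_le_mul (hgbd n ω) (hgbd n ω) (abs_nonneg _) zero_le_one
    _ = 1 := one_mul 1
  have hMg_int : ∀ n : ℕ, Integrable (fun ω => ((p - q) * X 1 ω) * (S n ω / (n : ℝ))) P := by
    intro n
    refine integrable_of_bdd (hMmeas.mul (hgmeas n)) (C := 1) fun ω => ?_
    rw [abs_mul]
    calc |(p - q) * X 1 ω| * |S n ω / (n : ℝ)| ≤ 1 * 1 :=
      mul_le_mul (hMbd ω) (hgbd n ω) (abs_nonneg _) zero_le_one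
    _ = 1 := one_mul 1
  have hMsq_int : Integrable (fun ω => ((p - q) * X 1 ω) ^ 2) P := by
    refine integrable_of_bdd (hMmeas.pow_const 2) (C := 1) fun ω => ?_
    rw [abs_pow, sq]
    calc |(p - q) * X 1 ω| * |(p - q) * X 1 ω| ≤ 1 * 1 :=
      mul_le_mul (hMbd ω) (hMbd ω) (abs_nonneg _) zero_le_one
    _ = 1 := one_mul 1
  have hsq_exact : ∀ n : ℕ, 1 ≤ n → ∫ ω, (S n ω / (n : ℝ)) ^ 2 ∂P =
      (∫ ω, (S n ω / (n : ℝ) - (p - q) * X 1 ω) ^ 2 ∂P) +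
      2 * (∫ ω, ((p - q) * X 1 ω) * (S n ω / (n : ℝ)) ∂P) - (p - q) ^ 2 * (p + q) := by
    intro n hn
    have hpt : (fun ω => (S n ω / (n : ℝ) - (p - q) * X 1 ω) ^ 2) = fun ω =>
        (S n ω / (n : ℝ)) ^ 2 - 2 * (((p - q) * X 1 ω) * (S n ω / (n : ℝ))) +
        ((p - q) * X 1 ω) ^ 2 := funext fun ω => by ring
    have e1 : ∫ ω, (S n ω / (n : ℝ) - (p - q) * X 1 ω) ^ 2 ∂P =
        (∫ ω, (S n ω / (n : ℝ)) ^ 2 ∂P) -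
        2 * (∫ ω, ((p - q) * X 1 ω) * (S n ω / (n : ℝ)) ∂P) + (p - q) ^ 2 * (p + q) := by
      have hint_ab : Integrable (fun ω => (S n ω / (n : ℝ)) ^ 2 -
          2 * (((p - q) * X 1 ω) * (S n ω / (n : ℝ)))) P :=
        (hgint2 n).sub ((hMg_int n).const_mul 2)
      rw [hpt, integral_add hint_ab hMsq_int,
        integral_sub (hgint2 n) ((hMg_int n).const_mul 2), integral_const_mul, hEMsq]
    linarith
  have hsqmom : Tendsto (fun n : ℕ => ∫ ω, (S n ω / (n : ℝ)) ^ 2 ∂P) atTop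
      (𝓝 ((p - q) ^ 2 * (p + q))) := by
    have hcomb := (heps0.add (hw.const_mul 2)).sub
      (tendsto_const_nhds (x := (p - q) ^ 2 * (p + q)) (f := atTop))
    have h0 : (0 : ℝ) + 2 * ((p - q) ^ 2 * (p + q)) - (p - q) ^ 2 * (p + q) =
        (p - q) ^ 2 * (p + q) := by ring
    rw [h0] at hcomb
    refine Tendsto.congr' ?_ hcomb
    filter_upwards [eventually_ge_atTop 1] with n hn
    exact (hsq_exact n hn).symm
  -- variance
  have hmem2 : ∀ n : ℕ, MemLp (fun ω => S n ω / (n : ℝ)) 2 P := fun n =>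
    MemLp.of_bound (hgmeas n).aestronglyMeasurable 1
      (ae_of_all _ fun ω => by rw [Real.norm_eq_abs]; exact hgbd n ω)
  have hvar : Tendsto (fun n : ℕ => variance (fun ω => S n ω / (n : ℝ)) P) atTop
      (𝓝 ((p - q) ^ 2 * (p + q - (p - q) ^ 2))) := by
    have heq : ∀ n : ℕ, variance (fun ω => S n ω / (n : ℝ)) P =
        (∫ ω, (S n ω / (n : ℝ)) ^ 2 ∂P) - (∫ ω, S n ω / (n : ℝ) ∂P) ^ 2 := by
      intro n
      rw [variance_eq_sub (hmem2 n)]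
      congr 1
    have hval : (p - q) ^ 2 * (p + q) - ((p - q) ^ 2) ^ 2 =
        (p - q) ^ 2 * (p + q - (p - q) ^ 2) := by ring
    rw [← hval]
    exact Tendsto.congr (fun n => (heq n).symm) (hsqmom.sub (hmean.pow 2))
  -- convergence in measure
  have hTIM : TendstoInMeasure P (fun (n : ℕ) ω => S n ω / (n : ℝ)) atTop
      (fun ω => (p - q) * X 1 ω) := by
    rw [tendstoInMeasure_iff_dist]
    intro ε hε
    have hεpos : (0 : ℝ) < ε ^ 2 := by positivity
    have hub : ∀ n : ℕ, 1 ≤ n →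
        P {ω | ε ≤ dist (S n ω / (n : ℝ)) ((p - q) * X 1 ω)} ≤
          ENNReal.ofReal ((4 / n) / ε ^ 2) := by
      intro n hn
      have hDmeas : Measurable (fun ω => (S n ω / (n : ℝ) - (p - q) * X 1 ω) ^ 2) :=
        ((hgmeas n).sub hMmeas).pow_const 2
      have hDint : Integrable (fun ω => (S n ω / (n : ℝ) - (p - q) * X 1 ω) ^ 2) P := by
        refine integrable_of_bdd hDmeas (C := 4) fun ω => ?_
        rw [abs_pow, sq]
        have hd : |S n ω / (n : ℝ) - (p - q) * X 1 ω| ≤ 2 := by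
          calc |S n ω / (n : ℝ) - (p - q) * X 1 ω|
              ≤ |S n ω / (n : ℝ)| + |(p - q) * X 1 ω| := abs_sub _ _
          _ ≤ 1 + 1 := add_le_add (hgbd n ω) (hMbd ω)
          _ = 2 := by norm_num
        calc |S n ω / (n : ℝ) - (p - q) * X 1 ω| * |S n ω / (n : ℝ) - (p - q) * X 1 ω|
            ≤ 2 * 2 := mul_le_mul hd hd (abs_nonneg _) (by norm_num)
        _ = 4 := by norm_num
      have hsubset : {ω | ε ≤ dist (S n ω / (n : ℝ)) ((p - q) * X 1 ω)} ⊆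
          {ω | ENNReal.ofReal (ε ^ 2) ≤
            ENNReal.ofReal ((S n ω / (n : ℝ) - (p - q) * X 1 ω) ^ 2)} := by
        intro ω h
        simp only [Set.mem_setOf_eq, Real.dist_eq] at h ⊢
        refine ENNReal.ofReal_le_ofReal ?_
        calc ε ^ 2 = ε * ε := sq ε
        _ ≤ |S n ω / (n : ℝ) - (p - q) * X 1 ω| * |S n ω / (n : ℝ) - (p - q) * X 1 ω| :=
            mul_self_le_mul_self hε.le h
        _ = (S n ω / (n : ℝ) - (p - q) * X 1 ω) ^ 2 := by rw [abs_mul_abs_self, sq]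
      have hmark := mul_meas_ge_le_lintegral₀ (μ := P)
        (f := fun ω => ENNReal.ofReal ((S n ω / (n : ℝ) - (p - q) * X 1 ω) ^ 2))
        (ENNReal.measurable_ofReal.comp hDmeas).aemeasurable (ENNReal.ofReal (ε ^ 2))
      have hlin : ∫⁻ ω, ENNReal.ofReal ((S n ω / (n : ℝ) - (p - q) * X 1 ω) ^ 2) ∂P =
          ENNReal.ofReal (∫ ω, (S n ω / (n : ℝ) - (p - q) * X 1 ω) ^ 2 ∂P) :=
        (ofReal_integral_eq_lintegral_ofReal hDint
          (ae_of_all _ fun ω => sq_nonneg _)).symm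
      calc P {ω | ε ≤ dist (S n ω / (n : ℝ)) ((p - q) * X 1 ω)}
          ≤ P {ω | ENNReal.ofReal (ε ^ 2) ≤
              ENNReal.ofReal ((S n ω / (n : ℝ) - (p - q) * X 1 ω) ^ 2)} :=
            measure_mono hsubset
      _ ≤ ENNReal.ofReal (∫ ω, (S n ω / (n : ℝ) - (p - q) * X 1 ω) ^ 2 ∂P) /
            ENNReal.ofReal (ε ^ 2) := by
          rw [ENNReal.le_div_iff_mul_le (Or.inl (ENNReal.ofReal_pos.mpr hεpos).ne')
            (Or.inl ENNReal.ofReal_ne_top), mul_comm, ← hlin]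
          exact hmark
      _ ≤ ENNReal.ofReal ((4 / n) / ε ^ 2) := by
          rw [ENNReal.ofReal_div_of_pos hεpos]
          exact ENNReal.div_le_div_right (ENNReal.ofReal_le_ofReal (heps_le n hn)) _
    refine tendsto_of_tendsto_of_tendsto_of_le_of_le'
      (g := fun _ : ℕ => (0 : ℝ≥0∞))
      (h := fun n : ℕ => ENNReal.ofReal ((4 / (n : ℝ)) / ε ^ 2))
      tendsto_const_nhds ?_ ?_ ?_
    · have h1 : Tendsto (fun n : ℕ => (4 / (n : ℝ)) / ε ^ 2) atTop (𝓝 (0 / ε ^ 2)) :=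
        (tendsto_const_div_atTop_nhds_zero_nat 4).div_const _
      rw [zero_div] at h1
      have h2 := ENNReal.tendsto_ofReal h1
      rwa [ENNReal.ofReal_zero] at h2
    · exact Eventually.of_forall fun n => zero_le
    · filter_upwards [eventually_ge_atTop 1] with n hn; exact hub n hn
  refine ⟨?_, hmean, hvar⟩
  intro f
  have hmapeq : ∀ n : ℕ, ∫ x, f x ∂(Measure.map (fun ω => S n ω / (n : ℝ)) P) =
      ∫ ω, f (S n ω / (n : ℝ)) ∂P := fun n =>
    integral_map (hgmeas n).aemeasurable f.continuous.measurable.aestronglyMeasurable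
  haveI h1 : IsFiniteMeasure (ENNReal.ofReal p • (Measure.dirac (p - q)) : Measure ℝ) :=
    ⟨by simp [ENNReal.ofReal_lt_top]⟩
  haveI h2 : IsFiniteMeasure (ENNReal.ofReal r • (Measure.dirac (0 : ℝ)) : Measure ℝ) :=
    ⟨by simp [ENNReal.ofReal_lt_top]⟩
  haveI h3 : IsFiniteMeasure (ENNReal.ofReal q • (Measure.dirac (-(p - q))) : Measure ℝ) :=
    ⟨by simp [ENNReal.ofReal_lt_top]⟩
  have hν : ∫ x, f x ∂(ENNReal.ofReal p • Measure.dirac (p - q)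
      + ENNReal.ofReal r • Measure.dirac 0
      + ENNReal.ofReal q • Measure.dirac (-(p - q))) =
      p * f (p - q) + r * f 0 + q * f (-(p - q)) := by
    rw [integral_add_measure (f.integrable _) (f.integrable _),
      integral_add_measure (f.integrable _) (f.integrable _),
      integral_smul_measure, integral_smul_measure, integral_smul_measure,
      integral_dirac, integral_dirac, integral_dirac,
      ENNReal.toReal_ofReal hp.le, ENNReal.toReal_ofReal hq.le, ENNReal.toReal_ofReal hr.le]
    simp [smul_eq_mul]
  have hA : MeasurableSet {ω | X 1 ω = 1} := hXmeas 1 (measurableSet_singleton 1)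
  have hB : MeasurableSet {ω | X 1 ω = -1} := hXmeas 1 (measurableSet_singleton (-1))
  have hC : MeasurableSet {ω | X 1 ω = 0} := hXmeas 1 (measurableSet_singleton 0)
  have hPM : ∫ ω, f ((p - q) * X 1 ω) ∂P =
      p * f (p - q) + r * f 0 + q * f (-(p - q)) := by
    have hpart : (fun ω => f ((p - q) * X 1 ω)) = fun ω =>
        Set.indicator {ω | X 1 ω = 1} (fun _ => f (p - q)) ω +
        Set.indicator {ω | X 1 ω = -1} (fun _ => f (-(p - q))) ω +
        Set.indicator {ω | X 1 ω = 0} (fun _ => f 0) ω := by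
      funext ω
      rcases hXval 1 le_rfl ω with h | h | h <;>
        simp [Set.indicator_apply, h, show ¬((1:ℝ) = -1) from by norm_num,
          show ¬((-1:ℝ) = 1) from by norm_num, show ¬((1:ℝ) = 0) from by norm_num,
          show ¬((-1:ℝ) = 0) from by norm_num, show ¬((0:ℝ) = 1) from by norm_num,
          show ¬((0:ℝ) = -1) from by norm_num]
    rw [hpart]
    have hiAB : Integrable (fun ω =>
        Set.indicator {ω | X 1 ω = 1} (fun _ => f (p - q)) ω +
        Set.indicator {ω | X 1 ω = -1} (fun _ => f (-(p - q))) ω) P :=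
      ((integrable_const _).indicator hA).add ((integrable_const _).indicator hB)
    rw [integral_add hiAB ((integrable_const _).indicator hC),
      integral_add ((integrable_const _).indicator hA) ((integrable_const _).indicator hB),
      integral_indicator_const _ hA, integral_indicator_const _ hB,
      integral_indicator_const _ hC, measureReal_def, measureReal_def, measureReal_def, hX1p, hX1q, hX1r,
      ENNReal.toReal_ofReal hp.le, ENNReal.toReal_ofReal hq.le, ENNReal.toReal_ofReal hr.le]
    simp only [smul_eq_mul]
    ring
  refine tendsto_of_subseq_tendsto fun ns hns => ?_
  have hsub : TendstoInMeasure P (fun n ω => S (ns n) ω / (ns n : ℝ)) atTop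
      (fun ω => (p - q) * X 1 ω) := fun ε hε => (hTIM ε hε).comp hns
  obtain ⟨ms, -, hms⟩ := hsub.exists_seq_tendsto_ae
  refine ⟨ms, ?_⟩
  rw [hν]
  refine Tendsto.congr (fun n => (hmapeq _).symm) ?_
  rw [← hPM]
  exact tendsto_integral_of_dominated_convergence (fun _ => ‖f‖)
    (fun n => (f.continuous.measurable.comp (hgmeas _)).aestronglyMeasurable)
    (integrable_const _)
    (fun n => ae_of_all _ fun ω => f.norm_coe_le_norm _)
    (hms.mono fun ω hω => (f.continuous.tendsto _).comp hω)
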